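/- Let P be a commutative additive monoid and let σ be the subset of the real vector space of functions P → ℝ consisting of all u with u 0 = 0, u (p + q) = u p + u q for all p, q ∈ P, and u p ≥ 0 for all p ∈ P. For every additive submonoid S of P, the subset F = {u ∈ σ | u s = 0 for all s ∈ S} is an extreme subset of σ: F ⊆ σ, and whenever a point of F lies in the open segment joining two points of σ, both of those points lie in F. -/

import Mathlib

/-- For an additive submonoid `S` of a commutative additive monoid `P`, the subset of
the cone `σ = Hom(P, ℝ≥0) ⊆ (P → ℝ)` consisting of homomorphisms vanishing on `S` is an
extreme subset (a face) of `σ`. -/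
theorem isExtreme_vanishing_on_submonoid {P : Type*} [AddCommMonoid P]
    (S : AddSubmonoid P) :
    IsExtreme ℝ
      {u : P → ℝ | u 0 = 0 ∧ (∀ p q : P, u (p + q) = u p + u q) ∧ ∀ p : P, 0 ≤ u p}
      {u : P → ℝ | (u 0 = 0 ∧ (∀ p q : P, u (p + q) = u p + u q) ∧ ∀ p : P, 0 ≤ u p) ∧
        ∀ s ∈ S, u s = 0} := by
  constructor
  · intro u hu
    exact hu.1
  · rintro y hy z hz x hx hseg
    obtain ⟨a, b, ha, hb, hab, hsum⟩ := hseg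
    have key : ∀ s ∈ S, y s = 0 ∧ z s = 0 := by
      intro s hs
      have hx0 : x s = 0 := hx.2 s hs
      have h0 : a * y s + b * z s = 0 := by
        have := congrFun hsum s
        simpa [Pi.add_apply] using this.trans hx0
      have hy' : 0 ≤ a * y s := mul_nonneg ha.le (hy.2.2 s)
      have hz' : 0 ≤ b * z s := mul_nonneg hb.le (hz.2.2 s)
      have h1 : a * y s = 0 := by linarith
      have h2 : b * z s = 0 := by linarith
      exact ⟨by
        rcases mul_eq_zero.mp h1 with h | h
        · exact absurd h ha.ne'
        · exact h, by
        rcases mul_eq_zero.mp h2 with h | h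
        · exact absurd h hb.ne'
        · exact h⟩
    exact ⟨hy, fun s hs => (key s hs).1⟩
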